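/- For any n-qubit unitaries U and V, |P_{U†} ∩ P_V| ≤ s(UV), where P_W := (W P_n W†) ∩ P_n. -/

import Mathlib

open Matrix Complex
open scoped Matrix ComplexConjugate Pointwise

noncomputable section

/-- `n`-qubit operators: matrices indexed by computational basis strings. -/
abbrev QOp (n : ℕ) := Matrix (Fin n → Fin 2) (Fin n → Fin 2) ℂ

/-- `n`-qubit state vectors. -/
abbrev QVec (n : ℕ) := (Fin n → Fin 2) → ℂ

/-- Labels of the quotient Pauli group: one pair of bits `(a,b)` (meaning `X^a Z^b`
up to phase, i.e. `I, X, Y, Z`) per qubit.  This is the standard symplectic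
encoding of the strings `{0,1,2,3}^n`, with the additive (Klein) group structure
being exactly multiplication in the Pauli group modulo phases. -/
abbrev PauliLabel (n : ℕ) := Fin n → ZMod 2 × ZMod 2

def pauliX : Matrix (Fin 2) (Fin 2) ℂ := !![0,1;1,0]
def pauliY : Matrix (Fin 2) (Fin 2) ℂ := !![0,-Complex.I;Complex.I,0]
def pauliZ : Matrix (Fin 2) (Fin 2) ℂ := !![1,0;0,-1]

/-- The single-qubit Pauli matrix with label `(a,b)`: `I, X, Y, Z`. -/
def pauli1 (ab : ZMod 2 × ZMod 2) : Matrix (Fin 2) (Fin 2) ℂ :=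
  if ab = (0,0) then 1 else if ab = (1,0) then pauliX
  else if ab = (1,1) then pauliY else pauliZ

/-- The Pauli string `σ_u = σ_{u_1} ⊗ ⋯ ⊗ σ_{u_n}`. -/
def pauliStr {n : ℕ} (u : PauliLabel n) : QOp n :=
  Matrix.of fun x y => ∏ k, pauli1 (u k) (x k) (y k)

/-- The unitary Pauli function `P_U(u|v) = tr(σ_u U σ_v U†)/2^n`. -/
def PauliFun {n : ℕ} (U : QOp n) (u v : PauliLabel n) : ℂ :=
  (pauliStr u * U * pauliStr v * Uᴴ).trace / 2 ^ n

/-- `s(U)`: the number of pairs `(u,v)` with `P_U(u|v) = ±1`. -/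
def sU {n : ℕ} (U : QOp n) : ℕ :=
  Set.ncard {p : PauliLabel n × PauliLabel n |
    PauliFun U p.1 p.2 = 1 ∨ PauliFun U p.1 p.2 = -1}

/-- The unitary stabilizer nullity `v(U) = 2n − log₂ s(U)`. -/
def nullity {n : ℕ} (U : QOp n) : ℝ := 2 * n - Real.logb 2 (sU U)

/-- The state Pauli function `P_{|ψ⟩}(u) = ⟨ψ|σ_u|ψ⟩`. -/
def statePauliFun {n : ℕ} (ψ : QVec n) (u : PauliLabel n) : ℂ :=
  star ψ ⬝ᵥ (pauliStr u).mulVec ψ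

/-- `s(|ψ⟩)`: number of labels `u` with `⟨ψ|σ_u|ψ⟩ = ±1`. -/
def sState {n : ℕ} (ψ : QVec n) : ℕ :=
  Set.ncard {u : PauliLabel n | statePauliFun ψ u = 1 ∨ statePauliFun ψ u = -1}

/-- The state stabilizer nullity `v_s(|ψ⟩) = n − log₂ s(|ψ⟩)`. -/
def stateNullity {n : ℕ} (ψ : QVec n) : ℝ := n - Real.logb 2 (sState ψ)

/-- The `n`-qubit Pauli group with phases `±1, ±i`, as a set of matrices. -/
def fullPauliGroup (n : ℕ) : Set (QOp n) :=
  {P | ∃ (c : ℂ) (u : PauliLabel n),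
    (c = 1 ∨ c = -1 ∨ c = Complex.I ∨ c = -Complex.I) ∧ P = c • pauliStr u}

/-- A Clifford unitary: a unitary with `U P̂_n U† = P̂_n`. -/
def IsClifford {n : ℕ} (U : QOp n) : Prop :=
  U ∈ Matrix.unitaryGroup (Fin n → Fin 2) ℂ ∧
    (fun P => U * P * Uᴴ) '' fullPauliGroup n = fullPauliGroup n

/-- The subgroup (as a set of labels) associated with `U`:
`P_U = (U P_n U†) ∩ P_n` modulo phases. -/
def PsubU {n : ℕ} (U : QOp n) : Set (PauliLabel n) :=
  {u | ∃ (v : PauliLabel n) (c : ℂ),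
    (c = 1 ∨ c = -1 ∨ c = Complex.I ∨ c = -Complex.I) ∧
      U * pauliStr v * Uᴴ = c • pauliStr u}

/-- Tensor product of an `n`-qubit and an `m`-qubit operator. -/
def tensorOp {n m : ℕ} (U : QOp n) (V : QOp m) : QOp (n + m) :=
  Matrix.of fun x y =>
    U (fun i => x (Fin.castAdd m i)) (fun i => y (Fin.castAdd m i)) *
    V (fun j => x (Fin.natAdd n j)) (fun j => y (Fin.natAdd n j))

/-- The first `n` symbols of a label on `n+m` qubits. -/
def fstLab {n m : ℕ} (u : PauliLabel (n + m)) : PauliLabel n :=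
  fun i => u (Fin.castAdd m i)

/-- The last `m` symbols of a label on `n+m` qubits. -/
def sndLab {n m : ℕ} (u : PauliLabel (n + m)) : PauliLabel m :=
  fun j => u (Fin.natAdd n j)

/-- The T gate acting on qubit `q` (tensored with identity elsewhere). -/
def TgateOn (n : ℕ) (q : Fin n) : QOp n :=
  Matrix.of fun x y =>
    if x = y then (if x q = 0 then 1 else Complex.exp (Complex.I * (Real.pi / 4))) else 0

/-- The single-qubit T gate `diag(1, e^{iπ/4})`. -/
def Tgate : QOp 1 := TgateOn 1 0

/-- The `n`-fold tensor power of the Hadamard gate. -/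
def HadN (n : ℕ) : QOp n :=
  Matrix.of fun x y =>
    ∏ k, ((1 / (Real.sqrt 2) : ℂ) * (if x k = 1 ∧ y k = 1 then -1 else 1))

/-- The multi-controlled Z gate `C^{n-1}Z`. -/
def CnZ (n : ℕ) : QOp n :=
  Matrix.of fun x y => if x = y then (if ∀ k, x k = 1 then -1 else 1) else 0

/-- The computational basis state `|0⟩^{⊗n}`. -/
def ket0 (n : ℕ) : QVec n := fun x => if x = fun _ => (0 : Fin 2) then 1 else 0

/-- The state `|+⟩^{⊗n}`. -/
def ketPlus (n : ℕ) : QVec n := fun _ => (1 / (Real.sqrt 2 : ℂ)) ^ n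

/-- The `2n`-qubit maximally entangled state `2^{-n/2} ∑_x |x⟩|x⟩`. -/
def maxEnt (n : ℕ) : QVec (n + n) := fun x =>
  if (fun i => x (Fin.castAdd n i)) = (fun j => x (Fin.natAdd n j))
  then (1 / (Real.sqrt 2 : ℂ)) ^ n else 0

end

set_option maxHeartbeats 1000000 in
lemma pauli1_conjT (a : ZMod 2 × ZMod 2) : (pauli1 a)ᴴ = pauli1 a := by
  obtain ⟨a1, a2⟩ := a
  fin_cases a1 <;> fin_cases a2 <;>
    · ext i j
      fin_cases i <;> fin_cases j <;>
        simp (config := { decide := true }) [pauli1, pauliX, pauliY, pauliZ,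
          Matrix.conjTranspose_apply]

set_option maxHeartbeats 1000000 in
lemma trace_pauli1_mul (a b : ZMod 2 × ZMod 2) :
    (pauli1 a * pauli1 b).trace = if a = b then 2 else 0 := by
  obtain ⟨a1, a2⟩ := a; obtain ⟨b1, b2⟩ := b
  fin_cases a1 <;> fin_cases a2 <;> fin_cases b1 <;> fin_cases b2 <;>
    · simp (config := { decide := true }) [pauli1, pauliX, pauliY, pauliZ,
        Matrix.trace_fin_two, Matrix.mul_apply, Fin.sum_univ_two]
      try norm_num
section
variable {n : ℕ}

lemma sum_fun_prod {ι κ M : Type*} [Fintype ι] [Fintype κ] [DecidableEq ι] [CommSemiring M]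
    (g : ι → κ → M) : ∑ q : ι → κ, ∏ i, g i (q i) = ∏ i, ∑ j, g i j :=
  (Fintype.prod_sum fun i j => g i j).symm

lemma pauliStr_conjT (u : PauliLabel n) : (pauliStr u)ᴴ = pauliStr u := by
  ext x y
  simp only [Matrix.conjTranspose_apply, pauliStr, Matrix.of_apply, star_prod]
  refine Finset.prod_congr rfl fun k _ => ?_
  have := congrFun (congrFun (pauli1_conjT (u k)) (x k)) (y k)
  simpa [Matrix.conjTranspose_apply] using this

set_option maxHeartbeats 1000000 in
lemma trace_pauliStr_mul (u v : PauliLabel n) :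
    (pauliStr u * pauliStr v).trace = if u = v then (2 : ℂ) ^ n else 0 := by
  have h1 : (pauliStr u * pauliStr v).trace
      = ∑ p : (Fin n → Fin 2) × (Fin n → Fin 2),
          ∏ k, (pauli1 (u k) (p.1 k) (p.2 k) * pauli1 (v k) (p.2 k) (p.1 k)) := by
    simp [Matrix.trace, Matrix.diag, Matrix.mul_apply, pauliStr,
      ← Finset.prod_mul_distrib, Fintype.sum_prod_type]
  have h2 : (∑ p : (Fin n → Fin 2) × (Fin n → Fin 2),
          ∏ k, (pauli1 (u k) (p.1 k) (p.2 k) * pauli1 (v k) (p.2 k) (p.1 k)))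
      = ∑ q : Fin n → Fin 2 × Fin 2,
          ∏ k, (pauli1 (u k) (q k).1 (q k).2 * pauli1 (v k) (q k).2 (q k).1) :=
    Fintype.sum_equiv (Equiv.arrowProdEquivProdArrow (Fin n) (fun _ => Fin 2) (fun _ => Fin 2)).symm _ _
      (fun p => by simp [Equiv.arrowProdEquivProdArrow])
  have h3 : (∑ q : Fin n → Fin 2 × Fin 2,
          ∏ k, (pauli1 (u k) (q k).1 (q k).2 * pauli1 (v k) (q k).2 (q k).1))
      = ∏ k, ∑ ij : Fin 2 × Fin 2, pauli1 (u k) ij.1 ij.2 * pauli1 (v k) ij.2 ij.1 :=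
    @sum_fun_prod (Fin n) (Fin 2 × Fin 2) ℂ _ _ _ _
      (fun k ij => pauli1 (u k) ij.1 ij.2 * pauli1 (v k) ij.2 ij.1)
  have h4 : (∏ k, ∑ ij : Fin 2 × Fin 2, pauli1 (u k) ij.1 ij.2 * pauli1 (v k) ij.2 ij.1)
      = ∏ k, (pauli1 (u k) * pauli1 (v k)).trace := by
    refine Finset.prod_congr rfl fun k _ => ?_
    rw [Fintype.sum_prod_type]
    simp only [Matrix.trace, Matrix.diag, Matrix.mul_apply]
    try exact Finset.sum_comm
  rw [h1, h2, h3, h4]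
  by_cases huv : u = v
  · simp [huv, trace_pauli1_mul]
  · obtain ⟨k, hk⟩ : ∃ k, u k ≠ v k := by
      by_contra h'; push_neg at h'; exact huv (funext h')
    rw [Finset.prod_eq_zero (Finset.mem_univ k)]
    · simp [huv]
    · simp [trace_pauli1_mul, hk]

lemma pauliStr_ne_zero (u : PauliLabel n) : pauliStr u ≠ 0 := by
  intro h
  have h2 := trace_pauliStr_mul u u
  rw [h, if_pos rfl] at h2
  simp at h2
  exact pow_ne_zero n two_ne_zero h2.symm
end
section
variable {n : ℕ}

lemma pauli_smul_trace (u : PauliLabel n) (c : ℂ) :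
    (pauliStr u * (c • pauliStr u)).trace = c * 2 ^ n := by
  rw [Matrix.mul_smul, Matrix.trace_smul, trace_pauliStr_mul, if_pos rfl]
  simp

lemma smul_pauli_inj {u u' : PauliLabel n} {c c' : ℂ} (hc : c ≠ 0)
    (h : c • pauliStr u = c' • pauliStr u') : u = u' := by
  by_contra hne
  have h1 := congrArg (fun M => (pauliStr u * M).trace) h
  simp only [Matrix.mul_smul, Matrix.trace_smul, trace_pauliStr_mul, if_pos rfl,
    if_neg hne, smul_eq_mul, mul_zero] at h1
  exact hc (by
    have := mul_eq_zero.mp h1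
    rcases this with h | h
    · exact h
    · exact absurd h (pow_ne_zero n two_ne_zero))

lemma coef_real {W : QOp n} {v u : PauliLabel n} {c : ℂ}
    (hc : c = 1 ∨ c = -1 ∨ c = Complex.I ∨ c = -Complex.I)
    (h : W * pauliStr v * Wᴴ = c • pauliStr u) : c = 1 ∨ c = -1 := by
  have hH : (W * pauliStr v * Wᴴ)ᴴ = W * pauliStr v * Wᴴ := by
    simp [Matrix.conjTranspose_mul, pauliStr_conjT, mul_assoc]
  rw [h, Matrix.conjTranspose_smul, pauliStr_conjT] at hH
  have hcc : star c = c := by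
    by_contra hne
    apply pauliStr_ne_zero u
    have h0 : (star c - c) • pauliStr u = 0 := by rw [sub_smul, hH, sub_self]
    exact (smul_eq_zero.mp h0).resolve_left (sub_ne_zero.mpr hne)
  rcases hc with h' | h' | h' | h'
  · exact Or.inl h'
  · exact Or.inr h'
  · exfalso; rw [h'] at hcc; simp [Complex.ext_iff] at hcc; norm_num at hcc
  · exfalso; rw [h'] at hcc; simp [Complex.ext_iff] at hcc; norm_num at hcc

lemma pauliFun_of_conj (U V : QOp n) (u v₁ v₂ : PauliLabel n) (c d : ℂ)
    (h₁ : Uᴴ * pauliStr v₁ * U = c • pauliStr u)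
    (h₂ : V * pauliStr v₂ * Vᴴ = d • pauliStr u) :
    PauliFun (U * V) v₁ v₂ = c * d := by
  have key : (pauliStr v₁ * (U * V) * pauliStr v₂ * (U * V)ᴴ).trace = c * d * 2 ^ n := by
    calc (pauliStr v₁ * (U * V) * pauliStr v₂ * (U * V)ᴴ).trace
        = ((pauliStr v₁ * U) * (V * pauliStr v₂ * Vᴴ) * Uᴴ).trace := by
          simp only [Matrix.conjTranspose_mul, mul_assoc]
      _ = ((pauliStr v₁ * U) * (d • pauliStr u) * Uᴴ).trace := by rw [h₂]
      _ = (Uᴴ * ((pauliStr v₁ * U) * (d • pauliStr u))).trace := Matrix.trace_mul_comm _ _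
      _ = ((Uᴴ * pauliStr v₁ * U) * (d • pauliStr u)).trace := by simp only [mul_assoc]
      _ = ((c • pauliStr u) * (d • pauliStr u)).trace := by rw [h₁]
      _ = c * d * 2 ^ n := by
          rw [Matrix.smul_mul, Matrix.trace_smul, pauli_smul_trace]
          simp [mul_assoc]
  rw [PauliFun, key, mul_div_assoc, div_self (pow_ne_zero n two_ne_zero : (2:ℂ)^n ≠ 0), mul_one]

end
theorem inter_le_sU_mul {n : ℕ} (U V : QOp n)
    (hU : U ∈ Matrix.unitaryGroup (Fin n → Fin 2) ℂ)
    (hV : V ∈ Matrix.unitaryGroup (Fin n → Fin 2) ℂ) :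
    Set.ncard (PsubU Uᴴ ∩ PsubU V) ≤ sU (U * V) := by
  classical
  have hdat : ∀ u ∈ PsubU Uᴴ ∩ PsubU V, ∃ p : PauliLabel n × PauliLabel n,
      (∃ c : ℂ, (c = 1 ∨ c = -1) ∧ Uᴴ * pauliStr p.1 * U = c • pauliStr u) ∧
      (∃ d : ℂ, (d = 1 ∨ d = -1) ∧ V * pauliStr p.2 * Vᴴ = d • pauliStr u) := by
    rintro u ⟨⟨v₁, c, hc, h₁⟩, ⟨v₂, d, hd, h₂⟩⟩
    have h₁' := h₁
    rw [Matrix.conjTranspose_conjTranspose] at h₁'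
    exact ⟨(v₁, v₂), ⟨c, coef_real hc h₁, h₁'⟩, ⟨d, coef_real hd h₂, h₂⟩⟩
  choose f hf1 hf2 using hdat
  let F : PauliLabel n → PauliLabel n × PauliLabel n := fun u =>
    if h : u ∈ PsubU Uᴴ ∩ PsubU V then f u h else (u, u)
  have hF : ∀ u (h : u ∈ PsubU Uᴴ ∩ PsubU V), F u = f u h := fun u h => dif_pos h
  show _ ≤ Set.ncard {p : PauliLabel n × PauliLabel n |
    PauliFun (U * V) p.1 p.2 = 1 ∨ PauliFun (U * V) p.1 p.2 = -1}
  apply Set.ncard_le_ncard_of_injOn F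
  · intro u hu
    rw [hF u hu]
    obtain ⟨c, hcpm, h₁⟩ := hf1 u hu
    obtain ⟨d, hdpm, h₂⟩ := hf2 u hu
    have := pauliFun_of_conj U V u (f u hu).1 (f u hu).2 c d h₁ h₂
    rw [Set.mem_setOf_eq, this]
    rcases hcpm with rfl | rfl <;> rcases hdpm with rfl | rfl <;> norm_num
  · intro a ha b hb hab
    rw [hF a ha, hF b hb] at hab
    obtain ⟨c, hcpm, h₁a⟩ := hf1 a ha
    obtain ⟨c', _, h₁b⟩ := hf1 b hb
    have h1 : (f a ha).1 = (f b hb).1 := congrArg Prod.fst hab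
    rw [h1] at h₁a
    have hcne : c ≠ 0 := by rcases hcpm with rfl | rfl <;> norm_num
    exact smul_pauli_inj hcne (h₁a.symm.trans h₁b)
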